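/- Let R be a commutative ring with two distinct maximal ideals M_1 and M_2 such that M_1 = P_{1,1} ⊕ P_{2,1} and M_2 = P_{1,2} ⊕ P_{2,2}, where all P_{i,j} are nonzero prime ideals of R. Then a contradiction follows; i.e., no commutative ring has two distinct maximal ideals each decomposing as a direct sum of two nonzero prime ideals in this way. -/
import Mathlib

/-- No commutative ring has two distinct maximal ideals each of which decomposes as
an internal direct sum of two nonzero prime ideals. -/
theorem stmt_10 (R : Type*) [CommRing R] (M₁ M₂ P₁₁ P₂₁ P₁₂ P₂₂ : Ideal R)
    (hM₁ : M₁.IsMaximal) (hM₂ : M₂.IsMaximal) (hMne : M₁ ≠ M₂)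
    (hP₁₁ : P₁₁.IsPrime) (hP₂₁ : P₂₁.IsPrime) (hP₁₂ : P₁₂.IsPrime) (hP₂₂ : P₂₂.IsPrime)
    (hne₁₁ : P₁₁ ≠ ⊥) (hne₂₁ : P₂₁ ≠ ⊥) (hne₁₂ : P₁₂ ≠ ⊥) (hne₂₂ : P₂₂ ≠ ⊥)
    (hsum₁ : M₁ = P₁₁ ⊔ P₂₁) (hdisj₁ : P₁₁ ⊓ P₂₁ = ⊥)
    (hsum₂ : M₂ = P₁₂ ⊔ P₂₂) (hdisj₂ : P₁₂ ⊓ P₂₂ = ⊥) :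
    False := by
  have hmul : P₁₁ * P₂₁ = ⊥ := le_bot_iff.mp (hdisj₁ ▸ Ideal.mul_le_inf)
  have h12 : P₁₁ ≤ P₁₂ ∨ P₂₁ ≤ P₁₂ :=
    (Ideal.IsPrime.mul_le hP₁₂).mp (hmul ▸ bot_le)
  have h22 : P₁₁ ≤ P₂₂ ∨ P₂₁ ≤ P₂₂ :=
    (Ideal.IsPrime.mul_le hP₂₂).mp (hmul ▸ bot_le)
  have key : M₁ ≤ M₂ := by
    rw [hsum₁, hsum₂]
    rcases h12 with h1 | h1 <;> rcases h22 with h2 | h2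
    · exact absurd (le_bot_iff.mp (hdisj₂ ▸ le_inf h1 h2)) hne₁₁
    · exact sup_le (h1.trans le_sup_left) (h2.trans le_sup_right)
    · exact sup_le (h2.trans le_sup_right) (h1.trans le_sup_left)
    · exact absurd (le_bot_iff.mp (hdisj₂ ▸ le_inf h1 h2)) hne₂₁
  exact hMne (hM₁.eq_of_le hM₂.ne_top key)
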